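/- Let q be an odd prime power, let α ∈ F_{q⁴} generate F_{q⁴} over F_q, and let Ψ ∈ PGL₂(F_{q⁴}) satisfy ΨΓΨ⁻¹ = [[−1,0],[0,1]] where Γ ∈ PGL₂(F_q) is the involution swapping α with α^{q²} and α^q with α^{q³}. Then Ψ(α)^{q²} = −Ψ(α), and consequently Ψ(α)^{q²−1} = −1, so the multiplicative order of Ψ(α) divides 2(q²−1) and is even. -/

import Mathlib

open Matrix
open scoped LinearAlgebra.Projectivization

/-- The Möbius action of `GL(2,K)` on the projective line `ℙ K (Fin 2 → K)`.
Since scalar matrices act trivially, this realizes the action of `PGL₂(K)`. -/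
noncomputable def mobius {K : Type*} [Field K] (M : GL (Fin 2) K)
    (p : ℙ K (Fin 2 → K)) : ℙ K (Fin 2 → K) :=
  Projectivization.map
    (LinearMap.GeneralLinearGroup.toLinearEquiv
      (Matrix.GeneralLinearGroup.toLin M)).toLinearMap
    (LinearEquiv.injective _) p

/-- The point `[x : 1]` of the projective line. -/
noncomputable def pt {K : Type*} [Field K] (x : K) : ℙ K (Fin 2 → K) :=
  Projectivization.mk K ![x, 1] (by
    intro h
    simpa using congrFun h 1)

lemma mk_congr {K : Type*} [Field K] {v w : Fin 2 → K} (h : v = w) (hv : v ≠ 0) (hw : w ≠ 0) :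
    Projectivization.mk K v hv = Projectivization.mk K w hw := by subst h; rfl

lemma mulVec_GL_ne_zero {K : Type*} [Field K] (M : GL (Fin 2) K) {w : Fin 2 → K} (hw : w ≠ 0) :
    (M : Matrix (Fin 2) (Fin 2) K).mulVec w ≠ 0 := by
  intro h
  apply hw
  have h2 := congrArg (fun u => ((M⁻¹ : GL (Fin 2) K) : Matrix (Fin 2) (Fin 2) K).mulVec u) h
  simp only [Matrix.mulVec_mulVec, Matrix.mulVec_zero, Matrix.coe_units_inv] at h2
  rwa [Matrix.nonsing_inv_mul (M : Matrix (Fin 2) (Fin 2) K)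
      ((Matrix.isUnit_iff_isUnit_det _).mp M.isUnit), Matrix.one_mulVec] at h2

lemma mobius_mk {K : Type*} [Field K] (M : GL (Fin 2) K) (v : Fin 2 → K) (hv : v ≠ 0)
    (h2 : (M : Matrix (Fin 2) (Fin 2) K).mulVec v ≠ 0) :
    mobius M (Projectivization.mk K v hv) =
      Projectivization.mk K ((M : Matrix (Fin 2) (Fin 2) K).mulVec v) h2 := by
  unfold mobius
  rw [Projectivization.map_mk]
  congr 1

lemma mobius_inj {K : Type*} [Field K] (M : GL (Fin 2) K) :
    Function.Injective (mobius M) :=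
  Projectivization.map_injective _ (LinearEquiv.injective _)

lemma pt_inj {K : Type*} [Field K] : Function.Injective (pt (K := K)) := by
  intro x y h
  rw [pt, pt, Projectivization.mk_eq_mk_iff] at h
  obtain ⟨a, ha⟩ := h
  have h1 := congrFun ha 1
  have h0 := congrFun ha 0
  simp [Units.smul_def] at h1 h0
  rw [h1] at h0
  simpa using h0.symm

lemma mobius_mobius {K : Type*} [Field K] (M N : GL (Fin 2) K) (p : ℙ K (Fin 2 → K)) :
    mobius M (mobius N p) = mobius (M * N) p := by
  induction p using Projectivization.ind with
  | h v hv =>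
    rw [mobius_mk N v hv (mulVec_GL_ne_zero N hv),
      mobius_mk M _ (mulVec_GL_ne_zero N hv) (mulVec_GL_ne_zero M (mulVec_GL_ne_zero N hv)),
      mobius_mk (M * N) v hv (mulVec_GL_ne_zero (M * N) hv)]
    exact mk_congr (by rw [Matrix.mulVec_mulVec, ← Units.val_mul]) _ _

/-- Let `q` be an odd prime power, `K = F_{q⁴}`, and `α` a generator of `K` over `F_q`.
Let `Γ` be the involution of `PGL₂(F_q)` (represented by a matrix with entries fixed by
the `q`-power Frobenius) swapping `α` with `α^{q²}` and `α^q` with `α^{q³}`, and let `Ψ`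
be an element of `PGL₂(F_{q⁴})` with `F_{q²}`-rational entries satisfying
`ΨΓΨ⁻¹ = [[−1,0],[0,1]]` in `PGL₂`.  Then `Ψ(α)` is a finite point `β` with
`β^{q²} = −β`; consequently `β^{q²−1} = −1`, so the multiplicative order of `β` divides
`2(q²−1)` and is even. -/
theorem psi_alpha_power_order
    (q : ℕ) (hq : Odd q) (hq1 : 1 < q)
    {K : Type*} [Field K] [Fintype K]
    (hK : Fintype.card K = q ^ 4)
    (α : K) (hgen : α ^ q ^ 2 ≠ α)
    (Γ : GL (Fin 2) K)
    (hΓrat : ∀ i j, ((Γ : Matrix (Fin 2) (Fin 2) K) i j) ^ q =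
      (Γ : Matrix (Fin 2) (Fin 2) K) i j)
    (hΓ₁ : mobius Γ (pt α) = pt (α ^ q ^ 2))
    (hΓ₂ : mobius Γ (pt (α ^ q ^ 2)) = pt α)
    (hΓ₃ : mobius Γ (pt (α ^ q)) = pt (α ^ q ^ 3))
    (hΓ₄ : mobius Γ (pt (α ^ q ^ 3)) = pt (α ^ q))
    (hΓinv : ∀ p, mobius Γ (mobius Γ p) = p)
    (Ψ : GL (Fin 2) K)
    (hΨrat : ∀ i j, ((Ψ : Matrix (Fin 2) (Fin 2) K) i j) ^ q ^ 2 =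
      (Ψ : Matrix (Fin 2) (Fin 2) K) i j)
    (hconj : ∃ c : Kˣ,
      ((Ψ * Γ * Ψ⁻¹ : GL (Fin 2) K) : Matrix (Fin 2) (Fin 2) K) =
        (c : K) • !![(-1 : K), 0; 0, 1]) :
    ∃ β : Kˣ, mobius Ψ (pt α) = pt (β : K) ∧
      (β : K) ^ q ^ 2 = -(β : K) ∧
      (β : K) ^ (q ^ 2 - 1) = -1 ∧
      orderOf β ∣ 2 * (q ^ 2 - 1) ∧ Even (orderOf β) := by
  -- characteristic setup
  obtain ⟨p, hC⟩ := CharP.exists K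
  haveI := hC
  have hp : p.Prime := CharP.char_is_prime K p
  haveI : Fact p.Prime := ⟨hp⟩
  obtain ⟨n, -, hcard⟩ := FiniteField.card K p
  rw [hK] at hcard
  obtain ⟨m, hmn, hqm⟩ : ∃ m, m ≤ (n : ℕ) ∧ q = p ^ m :=
    (Nat.dvd_prime_pow hp).mp (hcard ▸ dvd_pow_self q (by norm_num : (4 : ℕ) ≠ 0))
  have hm1 : 1 ≤ m := by
    rcases Nat.eq_zero_or_pos m with h | h
    · subst h; simp at hqm; omega
    · exact h
  have hp2 : 2 < p := by
    have h2 := hp.two_le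
    rcases Nat.lt_or_ge 2 p with h | h
    · exact h
    · exfalso
      have hpe : p = 2 := by omega
      have : (2 : ℕ) ∣ q := by
        rw [hqm, hpe]; exact dvd_pow_self 2 (by omega)
      rw [Nat.odd_iff] at hq; omega
  haveI : Fact (2 < p) := ⟨hp2⟩
  have hneg : (-1 : K) ≠ 1 := CharP.neg_one_ne_one (R := K) p
  have hq2 : q ^ 2 = p ^ (2 * m) := by rw [hqm, ← pow_mul, mul_comm]
  have hq2ne : q ^ 2 ≠ 0 := by positivity
  have hadd : ∀ x y : K, (x + y) ^ q ^ 2 = x ^ q ^ 2 + y ^ q ^ 2 := by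
    intro x y; rw [hq2]; exact add_pow_char_pow x y p (2 * m)
  -- matrices and vectors
  set A : Matrix (Fin 2) (Fin 2) K := (Ψ : Matrix (Fin 2) (Fin 2) K) with hA
  set v : Fin 2 → K := fun i => A i 0 * α + A i 1 with hvdef
  have hone : (![α, 1] : Fin 2 → K) ≠ 0 := by intro h; simpa using congrFun h 1
  have honeq : (![α ^ q ^ 2, 1] : Fin 2 → K) ≠ 0 := by intro h; simpa using congrFun h 1
  have hmv : A.mulVec ![α, 1] = v := by
    funext i; simp [Matrix.mulVec, dotProduct, Fin.sum_univ_two, hvdef, Matrix.vecHead, Matrix.vecTail]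
  have hv : v ≠ 0 := hmv ▸ mulVec_GL_ne_zero Ψ hone
  have hΨα : mobius Ψ (pt α) = Projectivization.mk K v hv := by
    rw [pt, mobius_mk Ψ ![α, 1] hone (mulVec_GL_ne_zero Ψ hone)]
    exact mk_congr hmv _ _
  -- Frobenius compatibility
  have hfrob : A.mulVec ![α ^ q ^ 2, 1] = fun i => v i ^ q ^ 2 := by
    funext i
    simp only [Matrix.mulVec, dotProduct, Fin.sum_univ_two, hvdef]
    simp only [Matrix.cons_val_zero, Matrix.cons_val_one, Matrix.head_cons, mul_one]
    rw [hadd, mul_pow, hΨrat i 0, hΨrat i 1]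
  have hw1 : (fun i => v i ^ q ^ 2) ≠ 0 := by
    intro h
    apply hv
    funext i
    have := congrFun h i
    simp only [Pi.zero_apply] at this ⊢
    exact pow_eq_zero_iff hq2ne |>.mp this
  have hΨαq : mobius Ψ (pt (α ^ q ^ 2)) = Projectivization.mk K (fun i => v i ^ q ^ 2) hw1 := by
    rw [pt, mobius_mk Ψ ![α ^ q ^ 2, 1] honeq (mulVec_GL_ne_zero Ψ honeq)]
    exact mk_congr hfrob _ _
  -- conjugation
  obtain ⟨c, hc⟩ := hconj
  have hw2 : (![-(v 0), v 1] : Fin 2 → K) ≠ 0 := by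
    intro h
    apply hv
    funext i
    fin_cases i
    · have := congrFun h 0; simp at this; simpa using this
    · have := congrFun h 1; simpa using this
  have hDv : ((Ψ * Γ * Ψ⁻¹ : GL (Fin 2) K) : Matrix (Fin 2) (Fin 2) K).mulVec v =
      (c : K) • ![-(v 0), v 1] := by
    rw [hc, smul_mulVec]
    congr 1
    funext i
    fin_cases i <;>
      simp [Matrix.mulVec, dotProduct, Fin.sum_univ_two]
  have hsmul_ne : ((c : K) • ![-(v 0), v 1] : Fin 2 → K) ≠ 0 := by
    intro h
    apply hw2
    funext i
    have := congrFun h i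
    simp only [Pi.smul_apply, smul_eq_mul, Pi.zero_apply] at this ⊢
    exact (mul_eq_zero.mp this).resolve_left c.ne_zero
  have key : Projectivization.mk K (fun i => v i ^ q ^ 2) hw1 =
      Projectivization.mk K ![-(v 0), v 1] hw2 := by
    rw [← hΨαq, ← hΓ₁, mobius_mobius]
    have hgrp : Ψ * Γ = (Ψ * Γ * Ψ⁻¹) * Ψ := by group
    rw [hgrp, ← mobius_mobius, hΨα,
      mobius_mk _ v hv (hDv ▸ hsmul_ne), mk_congr hDv _ hsmul_ne]
    exact (Projectivization.mk_eq_mk_iff K _ _ hsmul_ne hw2).mpr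
      ⟨c, by funext i; simp [Units.smul_def]⟩
  -- rule out v 1 = 0 and v 0 = 0
  have contra_of_smul : ∀ (a : K), (∀ i, a * v i = v i ^ q ^ 2) → False := by
    intro a ha
    have : mobius Ψ (pt (α ^ q ^ 2)) = mobius Ψ (pt α) := by
      rw [hΨαq, hΨα]
      exact (Projectivization.mk_eq_mk_iff' K _ _ hw1 hv).mpr
        ⟨a, by funext i; simpa using ha i⟩
    exact hgen (pt_inj (mobius_inj Ψ this))
  have hv1 : v 1 ≠ 0 := by
    intro h1
    have hv0 : v 0 ≠ 0 := by
      intro h0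
      apply hv; funext i; fin_cases i
      · exact h0
      · exact h1
    apply contra_of_smul (v 0 ^ q ^ 2 / v 0)
    intro i
    fin_cases i
    · exact div_mul_cancel₀ _ hv0
    · simp [h1, zero_pow hq2ne]
  -- extract the relation
  have keyrel := (Projectivization.mk_eq_mk_iff' K _ _ hw1 hw2).mp key
  obtain ⟨a, ha⟩ := keyrel
  have ha0 : a * (-(v 0)) = v 0 ^ q ^ 2 := by simpa using congrFun ha 0
  have ha1 : a * v 1 = v 1 ^ q ^ 2 := by simpa using congrFun ha 1
  have hane : a ≠ 0 := by
    intro h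
    rw [h, zero_mul] at ha1
    exact pow_ne_zero _ hv1 ha1.symm
  set b : K := v 0 / v 1 with hbdef
  have hbq : b ^ q ^ 2 = -b := by
    rw [hbdef, div_pow, ← ha0, ← ha1, mul_div_mul_left _ _ hane, neg_div]
  have hb0 : b ≠ 0 := by
    intro h
    have hv0 : v 0 = 0 := by
      have := h
      rw [hbdef, div_eq_zero_iff] at this
      exact this.resolve_right hv1
    apply contra_of_smul (v 1 ^ q ^ 2 / v 1)
    intro i
    fin_cases i
    · simp [hv0, zero_pow hq2ne]
    · exact div_mul_cancel₀ _ hv1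
  have hptb : mobius Ψ (pt α) = pt b := by
    rw [hΨα, pt]
    refine (Projectivization.mk_eq_mk_iff' K _ _ hv _).mpr ⟨v 1, ?_⟩
    funext i
    fin_cases i
    · show v 1 * b = v 0
      rw [hbdef, mul_div_cancel₀ _ hv1]
    · show v 1 * 1 = v 1
      ring
  have h1q2 : 1 ≤ q ^ 2 := Nat.one_le_iff_ne_zero.mpr hq2ne
  have hbq1 : b ^ (q ^ 2 - 1) = -1 := by
    have hmul : b ^ (q ^ 2 - 1) * b = (-1) * b := by
      rw [← pow_succ, Nat.sub_add_cancel h1q2, hbq, neg_one_mul]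
    exact mul_right_cancel₀ hb0 hmul
  have hu2 : (Units.mk0 b hb0) ^ (2 * (q ^ 2 - 1)) = 1 := by
    ext
    rw [Units.val_pow_eq_pow_val, Units.val_mk0, Units.val_one,
      mul_comm 2 (q ^ 2 - 1), pow_mul, hbq1]
    norm_num
  have hdvd : orderOf (Units.mk0 b hb0) ∣ 2 * (q ^ 2 - 1) := orderOf_dvd_of_pow_eq_one hu2
  refine ⟨Units.mk0 b hb0, hptb, hbq, hbq1, hdvd, ?_⟩
  · by_contra hodd
    rw [Nat.not_even_iff_odd] at hodd
    have hcop : Nat.Coprime (orderOf (Units.mk0 b hb0)) 2 := hodd.coprime_two_right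
    have hdvd' : orderOf (Units.mk0 b hb0) ∣ (q ^ 2 - 1) :=
      (Nat.Coprime.dvd_of_dvd_mul_left hcop hdvd)
    have : (Units.mk0 b hb0) ^ (q ^ 2 - 1) = 1 := orderOf_dvd_iff_pow_eq_one.mp hdvd'
    have hb1 : b ^ (q ^ 2 - 1) = 1 := by
      have h := congrArg (Units.val) this
      rwa [Units.val_pow_eq_pow_val, Units.val_mk0, Units.val_one] at h
    rw [hbq1] at hb1
    exact hneg hb1
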